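/- Let ε > 0, δ ∈ (0,1), k = ⌈(1/ε)·ln((e^ε + 2δ − 1)/((e^ε + 1)δ))⌉, and let X follow the k-TSGD with mass P[X = x] = c·e^{−|x|ε} for |x| ≤ k, where c = (1−e^{−ε})/(1 + e^{−ε} − 2e^{−(k+1)ε}). For any μ ∈ ℤ, let Y = μ + X and Y' = (μ+1) + X. Then for every set S ⊆ ℤ: P[Y' ∈ S] ≤ e^ε·P[Y ∈ S] + δ and P[Y ∈ S] ≤ e^ε·P[Y' ∈ S] + δ. (The truncated geometric mechanism is (ε,δ)-differentially private for sensitivity-1 integer queries.) -/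

import Mathlib

open Real

/-- Mass function of the `k`-truncated symmetric geometric distribution with
parameter `p = 1 - e^{-ε}`: `P[X = x] = c·e^{-|x|ε}` for `|x| ≤ k`, `0` otherwise. -/
noncomputable def tsgdMass (ε : ℝ) (k : ℤ) (x : ℤ) : ℝ :=
  if |x| ≤ k then
    ((1 - exp (-ε)) / (1 + exp (-ε) - 2 * exp (-((k : ℝ) + 1) * ε))) *
      exp (-(|x| : ℝ) * ε)
  else 0

theorem truncated_geometric_mechanism_dp
    (ε δ : ℝ) (hε : 0 < ε) (hδ0 : 0 < δ) (hδ1 : δ < 1)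
    (k : ℤ)
    (hk : k = ⌈(1 / ε) * Real.log ((exp ε + 2 * δ - 1) / ((exp ε + 1) * δ))⌉)
    (μ : ℤ) :
    ∀ S : Set ℤ,
      (∑' y : S, tsgdMass ε k ((y : ℤ) - (μ + 1))) ≤
        exp ε * (∑' y : S, tsgdMass ε k ((y : ℤ) - μ)) + δ ∧
      (∑' y : S, tsgdMass ε k ((y : ℤ) - μ)) ≤
        exp ε * (∑' y : S, tsgdMass ε k ((y : ℤ) - (μ + 1))) + δ := by
  have hE1 : (1 : ℝ) < exp ε := by
    rw [← Real.exp_zero]; exact Real.exp_lt_exp.2 hε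
  have hq0 : (0 : ℝ) < exp (-ε) := Real.exp_pos _
  have hq1 : exp (-ε) < 1 := by
    rw [← Real.exp_zero]; exact Real.exp_lt_exp.2 (by linarith)
  have hEq : exp ε * exp (-ε) = 1 := by
    rw [← Real.exp_add]; simp
  -- positivity of the components of the log argument
  have hnum : (0 : ℝ) < exp ε + 2 * δ - 1 := by nlinarith
  have hden : (0 : ℝ) < (exp ε + 1) * δ := by positivity
  have hApos : (0 : ℝ) < (exp ε + 2 * δ - 1) / ((exp ε + 1) * δ) := div_pos hnum hden
  have hA1 : (1 : ℝ) ≤ (exp ε + 2 * δ - 1) / ((exp ε + 1) * δ) := by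
    rw [one_le_div hden]; nlinarith
  -- k is nonnegative
  have hk0 : (0 : ℤ) ≤ k := by
    rw [hk]
    apply Int.ceil_nonneg
    apply mul_nonneg (by positivity)
    exact Real.log_nonneg hA1
  -- from the ceiling definition: log A ≤ k ε
  have hkε : Real.log ((exp ε + 2 * δ - 1) / ((exp ε + 1) * δ)) ≤ (k : ℝ) * ε := by
    have h1 : (1 / ε) * Real.log ((exp ε + 2 * δ - 1) / ((exp ε + 1) * δ)) ≤ (k : ℝ) := by
      rw [hk]; exact_mod_cast Int.le_ceil _
    have h2 := mul_le_mul_of_nonneg_right h1 hε.le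
    field_simp at h2
    rw [show (exp ε + 1) * δ = δ * (exp ε + 1) by ring]
    linarith [h2]
  have hAe : (exp ε + 2 * δ - 1) / ((exp ε + 1) * δ) ≤ exp ((k : ℝ) * ε) := by
    calc (exp ε + 2 * δ - 1) / ((exp ε + 1) * δ)
        = exp (Real.log ((exp ε + 2 * δ - 1) / ((exp ε + 1) * δ))) := (Real.exp_log hApos).symm
      _ ≤ exp ((k : ℝ) * ε) := Real.exp_le_exp.2 hkε
  -- key bound on exp(-kε)
  have ht : exp (-(k : ℝ) * ε) * (exp ε + 2 * δ - 1) ≤ (exp ε + 1) * δ := by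
    have hb : exp ε + 2 * δ - 1 ≤ exp ((k : ℝ) * ε) * ((exp ε + 1) * δ) :=
      (div_le_iff₀ hden).1 hAe
    have hinv : exp (-(k : ℝ) * ε) * exp ((k : ℝ) * ε) = 1 := by
      rw [← Real.exp_add]; ring_nf; exact Real.exp_zero
    have h3 := mul_le_mul_of_nonneg_left hb (Real.exp_pos (-(k : ℝ) * ε)).le
    nlinarith [h3, hinv]
  -- denominator positivity
  have hqk : exp (-((k : ℝ) + 1) * ε) ≤ exp (-ε) := by
    apply Real.exp_le_exp.2
    have : (0 : ℝ) ≤ (k : ℝ) := by exact_mod_cast hk0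
    nlinarith
  have hD : (0 : ℝ) < 1 + exp (-ε) - 2 * exp (-((k : ℝ) + 1) * ε) := by linarith
  have hc0 : (0 : ℝ) ≤
      (1 - exp (-ε)) / (1 + exp (-ε) - 2 * exp (-((k : ℝ) + 1) * ε)) :=
    div_nonneg (by linarith) hD.le
  -- nonnegativity of the mass
  have hnn : ∀ x : ℤ, 0 ≤ tsgdMass ε k x := by
    intro x
    unfold tsgdMass
    split
    · exact mul_nonneg hc0 (Real.exp_pos _).le
    · exact le_refl 0
  -- the corner bound: the mass at k is at most δ
  have hcorner : tsgdMass ε k k ≤ δ := by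
    unfold tsgdMass
    rw [if_pos (le_of_eq (abs_of_nonneg hk0))]
    have habsk : |((k : ℤ) : ℝ)| = (k : ℝ) := abs_of_nonneg (by exact_mod_cast hk0)
    rw [habsk, div_mul_eq_mul_div, div_le_iff₀ hD]
    have hsplit : exp (-((k : ℝ) + 1) * ε) = exp (-(k : ℝ) * ε) * exp (-ε) := by
      rw [← Real.exp_add]; ring_nf
    rw [hsplit]
    have h5 := mul_le_mul_of_nonneg_right ht hq0.le
    have h6 : exp (-(k : ℝ) * ε) * (exp ε * exp (-ε)) = exp (-(k : ℝ) * ε) := by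
      rw [hEq, mul_one]
    have h7 : δ * (exp ε * exp (-ε)) = δ := by rw [hEq, mul_one]
    nlinarith [h5, h6, h7]
  -- ratio bound inside the support
  have hratio : ∀ a b : ℤ, |a| ≤ k → |b| ≤ k → |b| ≤ |a| + 1 →
      tsgdMass ε k a ≤ exp ε * tsgdMass ε k b := by
    intro a b ha hb hab
    unfold tsgdMass
    rw [if_pos ha, if_pos hb]
    have hexp : exp (-(|a| : ℝ) * ε) ≤ exp ε * exp (-(|b| : ℝ) * ε) := by
      rw [← Real.exp_add]
      apply Real.exp_le_exp.2
      have hcast : |((b : ℤ) : ℝ)| ≤ |((a : ℤ) : ℝ)| + 1 := by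
        rw [← Int.cast_abs, ← Int.cast_abs]
        exact_mod_cast hab
      nlinarith
    nlinarith [mul_le_mul_of_nonneg_left hexp hc0]
  -- pointwise bound, direction 1
  have P1 : ∀ x : ℤ, tsgdMass ε k x ≤
      exp ε * tsgdMass ε k (x + 1) + (if x = k then δ else 0) := by
    intro x
    by_cases hxk : x = k
    · rw [hxk, if_pos rfl]
      have h1 : tsgdMass ε k (k + 1) = 0 := by
        unfold tsgdMass
        rw [if_neg]
        rw [abs_of_nonneg (by omega : (0:ℤ) ≤ k + 1)]
        omega
      rw [h1, mul_zero, zero_add]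
      exact hcorner
    · rw [if_neg hxk, add_zero]
      by_cases hx : |x| ≤ k
      · have hb := abs_le.1 hx
        have hx1 : |x + 1| ≤ k := abs_le.2 ⟨by omega, by omega⟩
        have habs : |x + 1| ≤ |x| + 1 := by
          have h := abs_sub_abs_le_abs_sub (x + 1) x
          simp at h
          omega
        exact hratio x (x + 1) hx hx1 habs
      · have h0 : tsgdMass ε k x = 0 := by unfold tsgdMass; rw [if_neg hx]
        rw [h0]
        exact mul_nonneg (Real.exp_pos ε).le (hnn (x + 1))
  -- pointwise bound, direction 2
  have P2 : ∀ x : ℤ, tsgdMass ε k (x + 1) ≤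
      exp ε * tsgdMass ε k x + (if x + 1 = -k then δ else 0) := by
    intro x
    by_cases hxk : x + 1 = -k
    · rw [if_pos hxk]
      have h1 : tsgdMass ε k (x + 1) = tsgdMass ε k k := by
        rw [hxk]
        unfold tsgdMass
        simp [abs_neg]
      rw [h1]
      have := mul_nonneg (Real.exp_pos ε).le (hnn x)
      linarith [hcorner]
    · rw [if_neg hxk, add_zero]
      by_cases hx1 : |x + 1| ≤ k
      · have hb := abs_le.1 hx1
        have hx : |x| ≤ k := abs_le.2 ⟨by omega, by omega⟩
        have habs : |x| ≤ |x + 1| + 1 := by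
          have h := abs_sub_abs_le_abs_sub x (x + 1)
          simp at h
          omega
        exact hratio (x + 1) x hx1 hx habs
      · have h0 : tsgdMass ε k (x + 1) = 0 := by unfold tsgdMass; rw [if_neg hx1]
        rw [h0]
        exact mul_nonneg (Real.exp_pos ε).le (hnn x)
  -- summability of shifted masses
  have hsum : ∀ ν : ℤ, Summable (fun y : ℤ => tsgdMass ε k (y - ν)) := by
    intro ν
    apply summable_of_finite_support
    apply Set.Finite.subset (Set.finite_Icc (ν - k) (ν + k))
    intro y hy
    simp only [Function.mem_support] at hy
    by_cases h : |y - ν| ≤ k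
    · have := abs_le.1 h
      exact Set.mem_Icc.2 ⟨by omega, by omega⟩
    · exfalso; apply hy; unfold tsgdMass; rw [if_neg h]
  intro S
  -- generic tsum step
  have tstep : ∀ (F G : ℤ → ℝ) (w : ℤ), Summable F → Summable G →
      (∀ y, F y ≤ exp ε * G y + if y = w then δ else 0) →
      (∑' y : S, F y) ≤ exp ε * (∑' y : S, G y) + δ := by
    intro F G w hFs hGs hpt
    rw [tsum_subtype S F, tsum_subtype S G]
    have h2 : Summable (S.indicator G) := hGs.indicator S
    have hδs : Summable (fun y : ℤ => if y = w then δ else 0) := (hasSum_ite_eq w δ).summable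
    have h3 : Summable (fun y : ℤ =>
        exp ε * S.indicator G y + if y = w then δ else 0) :=
      (h2.mul_left _).add hδs
    have hle : ∀ y, S.indicator F y ≤
        exp ε * S.indicator G y + if y = w then δ else 0 := by
      intro y
      by_cases hy : y ∈ S
      · rw [Set.indicator_of_mem hy, Set.indicator_of_mem hy]
        exact hpt y
      · rw [Set.indicator_of_notMem hy, Set.indicator_of_notMem hy]
        have h0 : (0 : ℝ) ≤ if y = w then δ else 0 := by
          split
          · linarith
          · exact le_refl 0
        simpa using h0
    calc ∑' y, S.indicator F y
        ≤ ∑' y, (exp ε * S.indicator G y + if y = w then δ else 0) :=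
          Summable.tsum_le_tsum hle (hFs.indicator S) h3
      _ = (∑' y, exp ε * S.indicator G y) + ∑' y : ℤ, (if y = w then δ else 0) :=
          Summable.tsum_add (h2.mul_left _) hδs
      _ = exp ε * (∑' y, S.indicator G y) + δ := by
          rw [tsum_mul_left, tsum_ite_eq]
  constructor
  · apply tstep _ _ (μ + 1 + k) (hsum (μ + 1)) (hsum μ)
    intro y
    have h := P1 (y - (μ + 1))
    have e1 : y - (μ + 1) + 1 = y - μ := by ring
    rw [e1] at h
    have e2 : (y - (μ + 1) = k) ↔ (y = μ + 1 + k) := by omega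
    rwa [if_congr e2 rfl rfl] at h
  · apply tstep _ _ (μ - k) (hsum μ) (hsum (μ + 1))
    intro y
    have h := P2 (y - (μ + 1))
    have e1 : y - (μ + 1) + 1 = y - μ := by ring
    rw [e1] at h
    have e2 : (y - μ = -k) ↔ (y = μ - k) := by omega
    rwa [if_congr e2 rfl rfl] at h
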